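/- Let τ belong to class 𝒯. Then there exist constants 0 < α < 1 and D > 0 such that for every nonnegative, non-increasing, bounded integrable function f: I → ℝ₊, one has ‖P_τ f‖_∞ ≤ α·‖f‖_∞ + D·‖f‖_1. -/

import Mathlib

open Set Filter MeasureTheory Topology

structure PCT where
  τ : ℝ → ℝ
  a : ℕ → ℝ
  b : ℕ → ℝ
  da : ℕ → ℝ
  maps_to : Set.MapsTo τ (Set.Icc 0 1) (Set.Icc 0 1)
  lt : ∀ i, a i < b i
  sub : ∀ i, Set.Ioo (a i) (b i) ⊆ Set.Icc (0:ℝ) 1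
  disj : Pairwise (Function.onFun Disjoint fun i => Set.Ioo (a i) (b i))
  null : volume (Set.Icc (0:ℝ) 1 \ ⋃ i, Set.Ioo (a i) (b i)) = 0
  mono : ∀ i, StrictMonoOn τ (Set.Ioo (a i) (b i))
  conv : ∀ i, ConvexOn ℝ (Set.Ioo (a i) (b i)) τ
  diff : ∀ i, ∀ x ∈ Set.Ioo (a i) (b i), DifferentiableAt ℝ τ x
  lim_zero : ∀ i, Filter.Tendsto τ (nhdsWithin (a i) (Set.Ioi (a i))) (nhds 0)
  deriv_lim : ∀ i, Filter.Tendsto (deriv τ) (nhdsWithin (a i) (Set.Ioi (a i))) (nhds (da i))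
  da_pos : ∀ i, 0 < da i
  sum_inv : Summable (fun i => 1 / da i)
  expand : (¬ AccPt (0:ℝ) (Filter.principal (Set.range a))) → ∃ i, a i = 0 ∧ 1 < da i

/-- The interval `(c,d)` follows a single sequence of branches under the first `n`
iterates of `τ`. -/
def IsBranchSeq (T : PCT) (n : ℕ) (c d : ℝ) : Prop :=
  c < d ∧ ∀ k < n, ∃ i, T.τ^[k] '' Set.Ioo c d ⊆ Set.Ioo (T.a i) (T.b i)

/-- `(c,d)` is a maximal open interval on which `τ^n` is a single monotone branch,
i.e. an element of the partition `𝒫⁽ⁿ⁾`. -/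
def IsBranchInterval (T : PCT) (n : ℕ) (c d : ℝ) : Prop :=
  IsBranchSeq T n c d ∧
    ∀ c' d', c' ≤ c → d ≤ d' → IsBranchSeq T n c' d' → c' = c ∧ d' = d

namespace PCT

variable (T : PCT)

lemma a_nonneg (i : ℕ) : 0 ≤ T.a i := by
  by_contra h
  push_neg at h
  have hm : (T.a i + min 0 (T.b i)) / 2 ∈ Set.Ioo (T.a i) (T.b i) := by
    constructor
    · have : T.a i < min 0 (T.b i) := lt_min h (T.lt i)
      linarith
    · have h1 : min 0 (T.b i) ≤ T.b i := min_le_right _ _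
      have : T.a i < min 0 (T.b i) := lt_min h (T.lt i)
      linarith
  have := (T.sub i hm).1
  have h2 : min 0 (T.b i) ≤ 0 := min_le_left _ _
  have : T.a i < min 0 (T.b i) := lt_min h (T.lt i)
  linarith

lemma b_le_one (i : ℕ) : T.b i ≤ 1 := by
  by_contra h
  push_neg at h
  have hm : (max 1 (T.a i) + T.b i) / 2 ∈ Set.Ioo (T.a i) (T.b i) := by
    have h1 : T.a i ≤ max 1 (T.a i) := le_max_right _ _
    have h2 : max 1 (T.a i) < T.b i := max_lt h (T.lt i)
    constructor <;> linarith
  have := (T.sub i hm).2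
  have h2 : max 1 (T.a i) < T.b i := max_lt h (T.lt i)
  have h3 : (1:ℝ) ≤ max 1 (T.a i) := le_max_left _ _
  linarith

lemma deriv_ge (i : ℕ) {x : ℝ} (hx : x ∈ Set.Ioo (T.a i) (T.b i)) :
    T.da i ≤ deriv T.τ x := by
  have hmono : MonotoneOn (deriv T.τ) (Set.Ioo (T.a i) (T.b i)) :=
    (T.conv i).monotoneOn_deriv (T.diff i)
  refine le_of_tendsto (T.deriv_lim i) ?_
  filter_upwards [Ioo_mem_nhdsGT_of_mem (Set.left_mem_Ico.2 hx.1)] with t ht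
  exact hmono ⟨ht.1, ht.2.trans hx.2⟩ hx (le_of_lt ht.2)

lemma expansion (i : ℕ) {x y : ℝ} (hx : x ∈ Set.Ioo (T.a i) (T.b i))
    (hy : y ∈ Set.Ioo (T.a i) (T.b i)) (hxy : x ≤ y) :
    T.da i * (y - x) ≤ T.τ y - T.τ x := by
  have hD : Convex ℝ (Set.Ioo (T.a i) (T.b i)) := convex_Ioo _ _
  have hC : ContinuousOn T.τ (Set.Ioo (T.a i) (T.b i)) := fun z hz =>
    (T.diff i z hz).continuousAt.continuousWithinAt
  have hd : DifferentiableOn ℝ T.τ (interior (Set.Ioo (T.a i) (T.b i))) := by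
    rw [interior_Ioo]
    exact fun z hz => (T.diff i z hz).differentiableWithinAt
  refine hD.mul_sub_le_image_sub_of_le_deriv hC hd ?_ x hx y hy hxy
  rw [interior_Ioo]
  exact fun z hz => T.deriv_ge i hz

/-- On each branch the preimage of a set `A` has measure at most `(1 / da i) * volume A`. -/
lemma branch_measure_bound (i : ℕ) (B A : Set ℝ)
    (hB : B ⊆ Set.Ioo (T.a i) (T.b i)) (hBA : T.τ '' B ⊆ A) :
    volume B ≤ ENNReal.ofReal (1 / T.da i) * volume A := by
  set u := T.a i
  set v := T.b i
  set d := T.da i with hdd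
  have hd : 0 < d := T.da_pos i
  have hmono : StrictMonoOn T.τ (Set.Ioo u v) := T.mono i
  have hexp : ∀ x ∈ Set.Ioo u v, ∀ y ∈ Set.Ioo u v, x ≤ y →
      d * (y - x) ≤ T.τ y - T.τ x := fun x hx y hy hxy => T.expansion i hx hy hxy
  set ψ := Function.invFunOn T.τ (Set.Ioo u v) with hψ
  have hinj : Set.InjOn T.τ (Set.Ioo u v) := hmono.injOn
  have hleft : ∀ x ∈ Set.Ioo u v, ψ (T.τ x) = x := fun x hx => hinj.leftInvOn_invFunOn hx
  have hlip : LipschitzOnWith (Real.toNNReal (1 / d)) ψ (T.τ '' B) := by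
    rw [lipschitzOnWith_iff_dist_le_mul]
    rintro y₁ ⟨x₁, hx₁, rfl⟩ y₂ ⟨x₂, hx₂, rfl⟩
    rw [hleft x₁ (hB hx₁), hleft x₂ (hB hx₂)]
    have hco : (Real.toNNReal (1 / d) : ℝ) = 1 / d := by
      rw [Real.coe_toNNReal]
      positivity
    rw [hco]
    have key : ∀ p q : ℝ, p ∈ Set.Ioo u v → q ∈ Set.Ioo u v → p ≤ q →
        dist q p ≤ 1 / d * dist (T.τ q) (T.τ p) := by
      intro p q hp hq hpq
      have h1 := hexp p hp q hq hpq
      have h2 : T.τ p ≤ T.τ q := by nlinarith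
      rw [Real.dist_eq, Real.dist_eq, abs_of_nonneg (by linarith), abs_of_nonneg (by linarith)]
      rw [div_mul_eq_mul_div, one_mul, le_div_iff₀ hd]
      linarith
    rcases le_total x₁ x₂ with h | h
    · have := key x₁ x₂ (hB hx₁) (hB hx₂) h
      rwa [dist_comm x₂ x₁, dist_comm (T.τ x₂) (T.τ x₁)] at this
    · exact key x₂ x₁ (hB hx₂) (hB hx₁) h
  have himg : B ⊆ ψ '' (T.τ '' B) := by
    intro x hx
    exact ⟨T.τ x, Set.mem_image_of_mem _ hx, hleft x (hB hx)⟩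
  calc volume B ≤ volume (ψ '' (T.τ '' B)) := measure_mono himg
    _ ≤ (Real.toNNReal (1 / d) : ENNReal) * volume (T.τ '' B) := by
        have := hlip.hausdorffMeasure_image_le (d := 1) zero_le_one
        rwa [MeasureTheory.hausdorffMeasure_real, ENNReal.rpow_one] at this
    _ ≤ ENNReal.ofReal (1 / d) * volume A := by
        rw [ENNReal.ofReal]
        exact mul_le_mul_right (measure_mono hBA) _

/-- Key estimate: the integral of a nonnegative function over the branch-wise
preimage of `A` is controlled by branch-wise essential bounds. -/
lemma key_lintegral (f : ℝ → ℝ) (w : ℕ → ENNReal)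
    (hw : ∀ i, ∀ᵐ x ∂(volume.restrict (Set.Ioo (T.a i) (T.b i))),
      ENNReal.ofReal (f x) ≤ w i)
    (A : Set ℝ) :
    ∫⁻ x in T.τ ⁻¹' A ∩ Set.Icc (0:ℝ) 1, ENNReal.ofReal (f x) ≤
      (∑' i, w i * ENNReal.ofReal (1 / T.da i)) * volume A := by
  set S := T.τ ⁻¹' A ∩ Set.Icc (0:ℝ) 1 with hS
  have hsub : S ⊆ (S \ ⋃ i, Set.Ioo (T.a i) (T.b i)) ∪ ⋃ i, (S ∩ Set.Ioo (T.a i) (T.b i)) := by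
    intro x hx
    by_cases h : x ∈ ⋃ i, Set.Ioo (T.a i) (T.b i)
    · rcases Set.mem_iUnion.1 h with ⟨i, hi⟩
      exact Or.inr (Set.mem_iUnion.2 ⟨i, hx, hi⟩)
    · exact Or.inl ⟨hx, h⟩
  calc ∫⁻ x in S, ENNReal.ofReal (f x)
      ≤ ∫⁻ x in (S \ ⋃ i, Set.Ioo (T.a i) (T.b i)) ∪ ⋃ i, (S ∩ Set.Ioo (T.a i) (T.b i)),
          ENNReal.ofReal (f x) :=
        lintegral_mono' (Measure.restrict_mono hsub le_rfl) le_rfl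
    _ ≤ (∫⁻ x in S \ ⋃ i, Set.Ioo (T.a i) (T.b i), ENNReal.ofReal (f x)) +
          ∫⁻ x in ⋃ i, (S ∩ Set.Ioo (T.a i) (T.b i)), ENNReal.ofReal (f x) :=
        lintegral_union_le _ _ _
    _ ≤ 0 + ∑' i, ∫⁻ x in S ∩ Set.Ioo (T.a i) (T.b i), ENNReal.ofReal (f x) := by
        gcongr
        · refine le_of_eq (setLIntegral_measure_zero _ _ ?_)
          refine measure_mono_null ?_ T.null
          exact Set.diff_subset_diff_left (Set.inter_subset_right)
        · exact lintegral_iUnion_le _ _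
    _ ≤ ∑' i, w i * ENNReal.ofReal (1 / T.da i) * volume A := by
        rw [zero_add]
        refine ENNReal.tsum_le_tsum fun i => ?_
        have hae : ∀ᵐ x ∂(volume.restrict (S ∩ Set.Ioo (T.a i) (T.b i))),
            ENNReal.ofReal (f x) ≤ w i :=
          Filter.Eventually.filter_mono
            (ae_mono (Measure.restrict_mono Set.inter_subset_right le_rfl)) (hw i)
        calc ∫⁻ x in S ∩ Set.Ioo (T.a i) (T.b i), ENNReal.ofReal (f x)
            ≤ ∫⁻ _ in S ∩ Set.Ioo (T.a i) (T.b i), w i := lintegral_mono_ae hae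
          _ = w i * volume (S ∩ Set.Ioo (T.a i) (T.b i)) := setLIntegral_const _ _
          _ ≤ w i * (ENNReal.ofReal (1 / T.da i) * volume A) := by
              refine mul_le_mul_right ?_ _
              refine T.branch_measure_bound i _ A Set.inter_subset_right ?_
              rintro y ⟨x, hx, rfl⟩
              exact hx.1.1
          _ = w i * ENNReal.ofReal (1 / T.da i) * volume A := by rw [mul_assoc]
    _ = (∑' i, w i * ENNReal.ofReal (1 / T.da i)) * volume A := ENNReal.tsum_mul_right

end PCT

/-- From the set-integral characterization, derive the essential-sup bound. -/
lemma fp_wrap (τf : ℝ → ℝ) (P : (ℝ → ℝ) → (ℝ → ℝ))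
    (hP : ∀ f : ℝ → ℝ, MeasureTheory.IntegrableOn f (Set.Icc (0:ℝ) 1) →
      MeasureTheory.IntegrableOn (P f) (Set.Icc (0:ℝ) 1) ∧
      ∀ A : Set ℝ, MeasurableSet A → A ⊆ Set.Icc (0:ℝ) 1 →
        ∫ x in A, P f x = ∫ x in τf ⁻¹' A ∩ Set.Icc (0:ℝ) 1, f x)
    (α D : ℝ) (hα0 : 0 ≤ α) (hD0 : 0 ≤ D)
    (f : ℝ → ℝ) (hf0 : ∀ x ∈ Set.Icc (0:ℝ) 1, 0 ≤ f x)
    (hfi : MeasureTheory.IntegrableOn f (Set.Icc (0:ℝ) 1))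
    (hkey : ∀ A : Set ℝ,
      ∫⁻ x in τf ⁻¹' A ∩ Set.Icc (0:ℝ) 1, ENNReal.ofReal (f x) ≤
        ENNReal.ofReal (α * (eLpNorm f ⊤ (volume.restrict (Set.Icc (0:ℝ) 1))).toReal
          + D * ∫ x in Set.Icc (0:ℝ) 1, f x) * volume A) :
    MeasureTheory.eLpNorm (P f) ⊤ (volume.restrict (Set.Icc (0:ℝ) 1)) ≤
      ENNReal.ofReal α * MeasureTheory.eLpNorm f ⊤ (volume.restrict (Set.Icc (0:ℝ) 1)) +
      ENNReal.ofReal D * MeasureTheory.eLpNorm f 1 (volume.restrict (Set.Icc (0:ℝ) 1)) := by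
  set μ := volume.restrict (Set.Icc (0:ℝ) 1) with hμ
  set M : ℝ := α * (eLpNorm f ⊤ μ).toReal + D * ∫ x in Set.Icc (0:ℝ) 1, f x with hM
  have hN1 : 0 ≤ ∫ x in Set.Icc (0:ℝ) 1, f x := by
    refine setIntegral_nonneg measurableSet_Icc hf0
  have hM0 : 0 ≤ M := by positivity
  have hPfint : MeasureTheory.Integrable (P f) μ := (hP f hfi).1
  have hform : ∀ s : Set ℝ, MeasurableSet s →
      ∫ x in s, P f x ∂μ
        = (∫⁻ x in τf ⁻¹' (s ∩ Set.Icc (0:ℝ) 1) ∩ Set.Icc (0:ℝ) 1,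
            ENNReal.ofReal (f x)).toReal := by
    intro s hs
    have h1 : μ.restrict s = volume.restrict (s ∩ Set.Icc (0:ℝ) 1) :=
      Measure.restrict_restrict hs
    have h2 := (hP f hfi).2 (s ∩ Set.Icc (0:ℝ) 1) (hs.inter measurableSet_Icc)
      Set.inter_subset_right
    set S' := τf ⁻¹' (s ∩ Set.Icc (0:ℝ) 1) ∩ Set.Icc (0:ℝ) 1 with hS'
    have hS'sub : S' ⊆ Set.Icc (0:ℝ) 1 := Set.inter_subset_right
    have hfiS : MeasureTheory.IntegrableOn f S' := hfi.mono_set hS'sub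
    have hae0 : 0 ≤ᵐ[volume.restrict S'] f := by
      have base : 0 ≤ᵐ[μ] f :=
        (ae_restrict_mem measurableSet_Icc).mono (fun x hx => hf0 x hx)
      exact base.filter_mono (ae_mono (Measure.restrict_mono hS'sub le_rfl))
    calc ∫ x in s, P f x ∂μ = ∫ x in s ∩ Set.Icc (0:ℝ) 1, P f x := by rw [h1]
      _ = ∫ x in S', f x := h2
      _ = (∫⁻ x in S', ENNReal.ofReal (f x)).toReal :=
        integral_eq_lintegral_of_nonneg_ae hae0 hfiS.1
  have hbound : ∀ s : Set ℝ, MeasurableSet s → μ s < ⊤ →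
      ∫ x in s, P f x ∂μ ≤ M * (μ s).toReal := by
    intro s hs hsfin
    rw [hform s hs]
    have h3 := hkey (s ∩ Set.Icc (0:ℝ) 1)
    have h4 : ENNReal.ofReal M * volume (s ∩ Set.Icc (0:ℝ) 1) = ENNReal.ofReal M * μ s := by
      rw [hμ, Measure.restrict_apply hs]
    have h5 : (ENNReal.ofReal M * μ s) ≠ ⊤ :=
      ENNReal.mul_ne_top ENNReal.ofReal_ne_top hsfin.ne
    calc (∫⁻ x in τf ⁻¹' (s ∩ Set.Icc (0:ℝ) 1) ∩ Set.Icc (0:ℝ) 1,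
            ENNReal.ofReal (f x)).toReal
        ≤ (ENNReal.ofReal M * μ s).toReal := by
          refine ENNReal.toReal_mono h5 ?_
          rw [← h4]; exact h3
      _ = M * (μ s).toReal := by
          rw [ENNReal.toReal_mul, ENNReal.toReal_ofReal hM0]
  have hnn : ∀ s : Set ℝ, MeasurableSet s → μ s < ⊤ → 0 ≤ ∫ x in s, P f x ∂μ := by
    intro s hs _
    rw [hform s hs]
    exact ENNReal.toReal_nonneg
  have haePf : 0 ≤ᵐ[μ] P f :=
    MeasureTheory.ae_nonneg_of_forall_setIntegral_nonneg hPfint hnn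
  have haeM : ∀ᵐ x ∂μ, P f x ≤ M := by
    have hg : MeasureTheory.Integrable (fun x => M - P f x) μ :=
      (MeasureTheory.integrable_const M).sub hPfint
    have := MeasureTheory.ae_nonneg_of_forall_setIntegral_nonneg hg ?_
    · filter_upwards [this] with x hx
      simp only [Pi.zero_apply] at hx
      linarith
    · intro s hs hsfin
      rw [MeasureTheory.integral_sub (MeasureTheory.integrable_const M).integrableOn
        hPfint.integrableOn, MeasureTheory.setIntegral_const]
      have h6 : ∫ x in s, P f x ∂μ ≤ M * (μ s).toReal := hbound s hs hsfin
      simp only [smul_eq_mul]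
      rw [show μ.real s = (μ s).toReal from rfl]
      linarith
  have habs : ∀ᵐ x ∂μ, ‖P f x‖ ≤ M := by
    filter_upwards [haePf, haeM] with x h1 h2
    rw [Real.norm_eq_abs, abs_of_nonneg h1]; exact h2
  calc eLpNorm (P f) ⊤ μ = eLpNormEssSup (P f) μ := eLpNorm_exponent_top
    _ ≤ ENNReal.ofReal M := eLpNormEssSup_le_of_ae_bound habs
    _ ≤ ENNReal.ofReal (α * (eLpNorm f ⊤ μ).toReal)
          + ENNReal.ofReal (D * ∫ x in Set.Icc (0:ℝ) 1, f x) := ENNReal.ofReal_add_le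
    _ ≤ ENNReal.ofReal α * eLpNorm f ⊤ μ + ENNReal.ofReal D * eLpNorm f 1 μ := by
        gcongr ?_ + ?_
        · rw [ENNReal.ofReal_mul hα0]
          exact mul_le_mul_right ENNReal.ofReal_toReal_le _
        · rw [ENNReal.ofReal_mul hD0]
          refine mul_le_mul_right ?_ _
          rw [MeasureTheory.eLpNorm_one_eq_lintegral_enorm,
            ← MeasureTheory.ofReal_integral_norm_eq_lintegral_enorm hfi]
          exact ENNReal.ofReal_le_ofReal ((le_abs_self _).trans
            (MeasureTheory.norm_integral_le_integral_norm f))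

/-- For an antitone nonnegative function, a pointwise bound away from `0`
in terms of the `L¹` norm. -/
lemma ptwise_bound (f : ℝ → ℝ) (hant : AntitoneOn f (Set.Icc (0:ℝ) 1))
    (hf0 : ∀ x ∈ Set.Icc (0:ℝ) 1, 0 ≤ f x)
    (hfi : MeasureTheory.IntegrableOn f (Set.Icc (0:ℝ) 1))
    {ε : ℝ} (hε : 0 < ε) (hε1 : ε ≤ 1) {x : ℝ} (hx : x ∈ Set.Icc (0:ℝ) 1) (hεx : ε ≤ x) :
    f x ≤ (∫ t in Set.Icc (0:ℝ) 1, f t) / ε := by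
  rw [le_div_iff₀ hε]
  have hIsub : Set.Icc (0:ℝ) ε ⊆ Set.Icc 0 1 := Set.Icc_subset_Icc_right hε1
  have h2 : ∫ _ in Set.Icc (0:ℝ) ε, (f x) ∂volume ≤ ∫ t in Set.Icc (0:ℝ) ε, f t := by
    refine MeasureTheory.setIntegral_mono_on ?_ (hfi.mono_set hIsub) measurableSet_Icc ?_
    · exact MeasureTheory.integrableOn_const
        (by rw [Real.volume_Icc]; exact ENNReal.ofReal_ne_top)
    · intro t ht
      exact hant (hIsub ht) hx (le_trans ht.2 hεx)
  have h3 : ∫ t in Set.Icc (0:ℝ) ε, f t ≤ ∫ t in Set.Icc (0:ℝ) 1, f t := by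
    refine MeasureTheory.setIntegral_mono_set hfi ?_ (HasSubset.Subset.eventuallyLE hIsub)
    exact (ae_restrict_mem measurableSet_Icc).mono (fun t ht => hf0 t ht)
  have h4 : ∫ _ in Set.Icc (0:ℝ) ε, (f x) ∂volume = f x * ε := by
    rw [MeasureTheory.setIntegral_const, Measure.real, Real.volume_Icc, sub_zero,
      ENNReal.toReal_ofReal hε.le, smul_eq_mul, mul_comm]
  linarith

/-- A real function is a.e. bounded by the `toReal` of its (finite) essential sup. -/
lemma ae_le_eLpNormTop_toReal (f : ℝ → ℝ) (μ : MeasureTheory.Measure ℝ)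
    (h : MeasureTheory.eLpNorm f ⊤ μ < ⊤) :
    ∀ᵐ x ∂μ, f x ≤ (MeasureTheory.eLpNorm f ⊤ μ).toReal := by
  have hfin : MeasureTheory.eLpNormEssSup f μ ≠ ⊤ := by
    rw [← MeasureTheory.eLpNorm_exponent_top]; exact h.ne
  filter_upwards [MeasureTheory.enorm_ae_le_eLpNormEssSup f μ] with x hx
  have h1 : ‖f x‖ ≤ (MeasureTheory.eLpNormEssSup f μ).toReal := by
    have := ENNReal.toReal_mono hfin hx
    rwa [toReal_enorm] at this
  rw [MeasureTheory.eLpNorm_exponent_top]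
  calc f x ≤ ‖f x‖ := by rw [Real.norm_eq_abs]; exact le_abs_self _
    _ ≤ _ := h1

lemma exists_eps (a : ℕ → ℝ) (ha : ∀ i, 0 < a i) (n : ℕ) :
    ∃ ε : ℝ, 0 < ε ∧ ε ≤ 1 ∧ ∀ i < n, ε ≤ a i := by
  induction n with
  | zero => exact ⟨1, one_pos, le_rfl, fun i hi => absurd hi (Nat.not_lt_zero i)⟩
  | succ m ih =>
    obtain ⟨ε, hε0, hε1, hε⟩ := ih
    refine ⟨min ε (a m), lt_min hε0 (ha m), (min_le_left _ _).trans hε1, ?_⟩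
    intro i hi
    rcases Nat.lt_succ_iff_lt_or_eq.1 hi with h | rfl
    · exact (min_le_left _ _).trans (hε i h)
    · exact min_le_right _ _

/-- Given branch-wise real bounds on `f` whose weighted sum is controlled by
`α ‖f‖_∞ + D ‖f‖₁`, conclude the essential sup bound on `P f`. -/
lemma per_f (T : PCT) (P : (ℝ → ℝ) → (ℝ → ℝ))
    (hP : ∀ f : ℝ → ℝ, MeasureTheory.IntegrableOn f (Set.Icc (0:ℝ) 1) →
      MeasureTheory.IntegrableOn (P f) (Set.Icc (0:ℝ) 1) ∧
      ∀ A : Set ℝ, MeasurableSet A → A ⊆ Set.Icc (0:ℝ) 1 →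
        ∫ x in A, P f x = ∫ x in T.τ ⁻¹' A ∩ Set.Icc (0:ℝ) 1, f x)
    (α D : ℝ) (hα0 : 0 ≤ α) (hD0 : 0 ≤ D)
    (f : ℝ → ℝ) (hf0 : ∀ x ∈ Set.Icc (0:ℝ) 1, 0 ≤ f x)
    (hfi : MeasureTheory.IntegrableOn f (Set.Icc (0:ℝ) 1))
    (weight : ℕ → ℝ) (hwnn : ∀ i, 0 ≤ weight i)
    (hwae : ∀ i, ∀ᵐ x ∂(volume.restrict (Set.Ioo (T.a i) (T.b i))), f x ≤ weight i)
    (hsum : Summable (fun i => weight i * (1 / T.da i)))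
    (hbound : (∑' i, weight i * (1 / T.da i)) ≤
      α * (MeasureTheory.eLpNorm f ⊤ (volume.restrict (Set.Icc (0:ℝ) 1))).toReal
        + D * ∫ x in Set.Icc (0:ℝ) 1, f x) :
    MeasureTheory.eLpNorm (P f) ⊤ (volume.restrict (Set.Icc (0:ℝ) 1)) ≤
      ENNReal.ofReal α * MeasureTheory.eLpNorm f ⊤ (volume.restrict (Set.Icc (0:ℝ) 1)) +
      ENNReal.ofReal D * MeasureTheory.eLpNorm f 1 (volume.restrict (Set.Icc (0:ℝ) 1)) := by
  refine fp_wrap T.τ P hP α D hα0 hD0 f hf0 hfi ?_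
  intro A
  have hw : ∀ i, ∀ᵐ x ∂(volume.restrict (Set.Ioo (T.a i) (T.b i))),
      ENNReal.ofReal (f x) ≤ ENNReal.ofReal (weight i) := by
    intro i
    filter_upwards [hwae i] with x hx
    exact ENNReal.ofReal_le_ofReal hx
  refine le_trans (T.key_lintegral f (fun i => ENNReal.ofReal (weight i)) hw A) ?_
  refine mul_le_mul_left ?_ _
  have h1 : ∀ i, ENNReal.ofReal (weight i) * ENNReal.ofReal (1 / T.da i)
      = ENNReal.ofReal (weight i * (1 / T.da i)) := by
    intro i
    rw [ENNReal.ofReal_mul (hwnn i)]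
  calc (∑' i, ENNReal.ofReal (weight i) * ENNReal.ofReal (1 / T.da i))
      = ∑' i, ENNReal.ofReal (weight i * (1 / T.da i)) := by
        exact tsum_congr h1
    _ = ENNReal.ofReal (∑' i, weight i * (1 / T.da i)) :=
        (ENNReal.ofReal_tsum_of_nonneg (fun i => mul_nonneg (hwnn i) (one_div_pos.2 (T.da_pos i)).le) hsum).symm
    _ ≤ _ := ENNReal.ofReal_le_ofReal hbound

/-- Theorem 2.1.6 (3). Let `τ ∈ 𝒯` with Frobenius–Perron operator `P`
(characterized by `∫_A P f dm = ∫_{τ⁻¹ A} f dm`). Then there are constants `0 < α < 1`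
and `D > 0` such that for every nonnegative, non-increasing, bounded integrable
`f : I → ℝ₊` one has `‖P f‖_∞ ≤ α ‖f‖_∞ + D ‖f‖₁`. -/
theorem frobeniusPerron_sup_bound (T : PCT) (P : (ℝ → ℝ) → (ℝ → ℝ))
    (hP : ∀ f : ℝ → ℝ, MeasureTheory.IntegrableOn f (Set.Icc (0:ℝ) 1) →
      MeasureTheory.IntegrableOn (P f) (Set.Icc (0:ℝ) 1) ∧
      ∀ A : Set ℝ, MeasurableSet A → A ⊆ Set.Icc (0:ℝ) 1 →
        ∫ x in A, P f x = ∫ x in T.τ ⁻¹' A ∩ Set.Icc (0:ℝ) 1, f x) :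
    ∃ α D : ℝ, 0 < α ∧ α < 1 ∧ 0 < D ∧
      ∀ f : ℝ → ℝ, (∀ x ∈ Set.Icc (0:ℝ) 1, 0 ≤ f x) →
        AntitoneOn f (Set.Icc (0:ℝ) 1) →
        MeasureTheory.IntegrableOn f (Set.Icc (0:ℝ) 1) →
        MeasureTheory.eLpNorm f ⊤ (volume.restrict (Set.Icc (0:ℝ) 1)) < ⊤ →
        MeasureTheory.eLpNorm (P f) ⊤ (volume.restrict (Set.Icc (0:ℝ) 1)) ≤
          ENNReal.ofReal α * MeasureTheory.eLpNorm f ⊤ (volume.restrict (Set.Icc (0:ℝ) 1)) +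
          ENNReal.ofReal D * MeasureTheory.eLpNorm f 1 (volume.restrict (Set.Icc (0:ℝ) 1)) := by
  classical
  set μ := volume.restrict (Set.Icc (0:ℝ) 1) with hμ
  set C : ℝ := ∑' i, 1 / T.da i with hC
  have hterm : ∀ i, 0 < 1 / T.da i := fun i => by
    have := T.da_pos i; positivity
  have hC0 : 0 < C := lt_of_lt_of_le (hterm 0)
    (Summable.le_tsum T.sum_inv 0 (fun j _ => (hterm j).le))
  by_cases hzero : ∃ i₀, T.a i₀ = 0
  · -- Case A: a branch starting at 0
    obtain ⟨i₀, hi₀⟩ := hzero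
    have hε0 : 0 < T.b i₀ := by
      have := T.lt i₀; rw [hi₀] at this; exact this
    have hε1 : T.b i₀ ≤ 1 := T.b_le_one i₀
    have hother : ∀ i, i ≠ i₀ → T.b i₀ ≤ T.a i := by
      intro i hne
      by_contra h
      push_neg at h
      have hai : 0 ≤ T.a i := T.a_nonneg i
      have h1 : T.a i < min (T.b i) (T.b i₀) := lt_min (T.lt i) h
      have htI : (T.a i + min (T.b i) (T.b i₀)) / 2 ∈ Set.Ioo (T.a i) (T.b i) := by
        have := min_le_left (T.b i) (T.b i₀)
        constructor <;> linarith
      have htI0 : (T.a i + min (T.b i) (T.b i₀)) / 2 ∈ Set.Ioo (T.a i₀) (T.b i₀) := by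
        rw [hi₀]
        have := min_le_right (T.b i) (T.b i₀)
        constructor <;> linarith
      exact (T.disj hne).le_bot ⟨htI, htI0⟩
    have hAcc : ¬ AccPt (0:ℝ) (Filter.principal (Set.range T.a)) := by
      rw [accPt_iff_nhds]
      push_neg
      refine ⟨Set.Ioo (-(T.b i₀)) (T.b i₀), Ioo_mem_nhds (by linarith) hε0, ?_⟩
      rintro y ⟨hy1, i, rfl⟩
      by_cases h : i = i₀
      · subst h; rw [hi₀]
      · exact absurd hy1.2 (not_lt.2 (hother i h))
    obtain ⟨j, hj0, hjda⟩ := T.expand hAcc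
    have hji : j = i₀ := by
      by_contra hne
      have hbj : 0 < T.b j := by
        have := T.lt j; rw [hj0] at this; exact this
      have h1 : (min (T.b j) (T.b i₀)) / 2 ∈ Set.Ioo (T.a j) (T.b j) := by
        rw [hj0]
        have h2 := lt_min hbj hε0
        have := min_le_left (T.b j) (T.b i₀)
        constructor <;> linarith
      have h2 : (min (T.b j) (T.b i₀)) / 2 ∈ Set.Ioo (T.a i₀) (T.b i₀) := by
        rw [hi₀]
        have h2 := lt_min hbj hε0
        have := min_le_right (T.b j) (T.b i₀)
        constructor <;> linarith
      exact (T.disj hne).le_bot ⟨h1, h2⟩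
    subst hji
    refine ⟨1 / T.da j, C / T.b j, one_div_pos.2 (T.da_pos j), ?_, div_pos hC0 hε0, ?_⟩
    · rw [div_lt_one (T.da_pos j)]; exact hjda
    intro f hf0 hant hfi hfsup
    have hN₁0 : 0 ≤ ∫ t in Set.Icc (0:ℝ) 1, f t := setIntegral_nonneg measurableSet_Icc hf0
    have hNinf0 : 0 ≤ (MeasureTheory.eLpNorm f ⊤ μ).toReal := ENNReal.toReal_nonneg
    have hw0 : ∀ i, 0 ≤ (if i = j then (MeasureTheory.eLpNorm f ⊤ μ).toReal
        else (∫ t in Set.Icc (0:ℝ) 1, f t) / T.b j) := by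
      intro i
      split
      · exact hNinf0
      · exact div_nonneg hN₁0 hε0.le
    refine per_f T P hP _ _ (one_div_pos.2 (T.da_pos j)).le (div_pos hC0 hε0).le f hf0 hfi
      (fun i => if i = j then (MeasureTheory.eLpNorm f ⊤ μ).toReal
        else (∫ t in Set.Icc (0:ℝ) 1, f t) / T.b j)
      hw0 ?_ ?_ ?_
    · -- branch-wise a.e. bounds
      intro i
      by_cases h : i = j
      · subst h
        simp only [if_pos rfl]
        exact (ae_le_eLpNormTop_toReal f μ hfsup).filter_mono
          (ae_mono (Measure.restrict_mono (T.sub i) le_rfl))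
      · simp only [if_neg h]
        filter_upwards [ae_restrict_mem measurableSet_Ioo] with x hx
        exact ptwise_bound f hant hf0 hfi hε0 hε1 (T.sub i hx)
          (le_trans (hother i h) hx.1.le)
    · -- summability
      refine Summable.of_nonneg_of_le
        (fun i => mul_nonneg (hw0 i) (hterm i).le)
        (fun i => ?_)
        (T.sum_inv.mul_left
          (max ((MeasureTheory.eLpNorm f ⊤ μ).toReal)
            ((∫ t in Set.Icc (0:ℝ) 1, f t) / T.b j)))
      refine mul_le_mul_of_nonneg_right ?_ (hterm i).le
      split
      · exact le_max_left _ _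
      · exact le_max_right _ _
    · -- the tsum bound
      set Ninf : ℝ := (MeasureTheory.eLpNorm f ⊤ μ).toReal with hNinf
      set N₁ : ℝ := ∫ t in Set.Icc (0:ℝ) 1, f t with hN₁
      have hg_le : ∀ i, (if i = j then Ninf else N₁ / T.b j) * (1 / T.da i) ≤
          (if i = j then Ninf * (1 / T.da j) else 0) + N₁ / T.b j * (1 / T.da i) := by
        intro i
        by_cases h : i = j
        · rw [if_pos h, if_pos h, h]
          have h9 : 0 ≤ N₁ / T.b j * (1 / T.da j) :=
            mul_nonneg (div_nonneg hN₁0 hε0.le) (hterm j).le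
          linarith
        · simp only [if_neg h]
          linarith
      have h1sum : Summable (fun i => if i = j then Ninf * (1 / T.da j) else 0) := by
        refine summable_of_ne_finset_zero (s := {j}) ?_
        intro i hi
        rw [if_neg (by simpa using hi)]
      have h2sum : Summable (fun i => N₁ / T.b j * (1 / T.da i)) :=
        T.sum_inv.mul_left _
      have hsum' : Summable (fun i => (if i = j then Ninf else N₁ / T.b j) * (1 / T.da i)) := by
        refine Summable.of_nonneg_of_le
          (fun i => mul_nonneg (hw0 i) (hterm i).le)
          hg_le (h1sum.add h2sum)
      calc (∑' i, (if i = j then Ninf else N₁ / T.b j) * (1 / T.da i))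
          ≤ ∑' i, ((if i = j then Ninf * (1 / T.da j) else 0) + N₁ / T.b j * (1 / T.da i)) :=
            Summable.tsum_le_tsum hg_le hsum' (h1sum.add h2sum)
        _ = (∑' i, (if i = j then Ninf * (1 / T.da j) else 0))
              + ∑' i, N₁ / T.b j * (1 / T.da i) := Summable.tsum_add h1sum h2sum
        _ = Ninf * (1 / T.da j) + N₁ / T.b j * C := by
            rw [tsum_ite_eq, tsum_mul_left]
        _ = 1 / T.da j * Ninf + C / T.b j * N₁ := by ring
  · -- Case B: all branches start strictly after 0
    push_neg at hzero
    have hapos : ∀ i, 0 < T.a i := fun i => (T.a_nonneg i).lt_of_ne' (hzero i)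
    have htail : Tendsto (fun m => ∑' k, 1 / T.da (k + m)) atTop (nhds 0) :=
      tendsto_sum_nat_add (fun i => 1 / T.da i)
    obtain ⟨n, hn⟩ := (htail.eventually_lt_const (by norm_num : (0:ℝ) < 1/2)).exists
    obtain ⟨ε, hδ0, hδ1, hδa⟩ := exists_eps T.a hapos n
    refine ⟨1/2, C / ε, by norm_num, by norm_num, div_pos hC0 hδ0, ?_⟩
    intro f hf0 hant hfi hfsup
    have hN₁0 : 0 ≤ ∫ t in Set.Icc (0:ℝ) 1, f t := setIntegral_nonneg measurableSet_Icc hf0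
    have hNinf0 : 0 ≤ (MeasureTheory.eLpNorm f ⊤ μ).toReal := ENNReal.toReal_nonneg
    have hw0 : ∀ i, 0 ≤ (if i < n then (∫ t in Set.Icc (0:ℝ) 1, f t) / ε
        else (MeasureTheory.eLpNorm f ⊤ μ).toReal) := by
      intro i
      split
      · exact div_nonneg hN₁0 hδ0.le
      · exact hNinf0
    refine per_f T P hP _ _ (by norm_num) (div_pos hC0 hδ0).le f hf0 hfi
      (fun i => if i < n then (∫ t in Set.Icc (0:ℝ) 1, f t) / ε
        else (MeasureTheory.eLpNorm f ⊤ μ).toReal)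
      hw0 ?_ ?_ ?_
    · intro i
      by_cases h : i < n
      · simp only [if_pos h]
        filter_upwards [ae_restrict_mem measurableSet_Ioo] with x hx
        exact ptwise_bound f hant hf0 hfi hδ0 hδ1 (T.sub i hx)
          (le_trans (hδa i h) hx.1.le)
      · simp only [if_neg h]
        exact (ae_le_eLpNormTop_toReal f μ hfsup).filter_mono
          (ae_mono (Measure.restrict_mono (T.sub i) le_rfl))
    · refine Summable.of_nonneg_of_le
        (fun i => mul_nonneg (hw0 i) (hterm i).le)
        (fun i => ?_)
        (T.sum_inv.mul_left
          (max ((∫ t in Set.Icc (0:ℝ) 1, f t) / ε)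
            ((MeasureTheory.eLpNorm f ⊤ μ).toReal)))
      refine mul_le_mul_of_nonneg_right ?_ (hterm i).le
      split
      · exact le_max_left _ _
      · exact le_max_right _ _
    · set Ninf : ℝ := (MeasureTheory.eLpNorm f ⊤ μ).toReal with hNinf
      set N₁ : ℝ := ∫ t in Set.Icc (0:ℝ) 1, f t with hN₁
      set q : ℕ → ℝ := fun i => if i < n then 0 else 1 / T.da i with hq
      have hq_nonneg : ∀ i, 0 ≤ q i := fun i => by
        simp only [hq]; split
        · exact le_rfl
        · exact (hterm i).le
      have hq_le : ∀ i, q i ≤ 1 / T.da i := fun i => by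
        simp only [hq]; split
        · exact (hterm i).le
        · exact le_rfl
      have hq_sum : Summable q := Summable.of_nonneg_of_le hq_nonneg hq_le T.sum_inv
      have hq_tsum : ∑' i, q i ≤ 1/2 := by
        have hsplit := hq_sum.sum_add_tsum_nat_add n
        have hzero' : ∑ i ∈ Finset.range n, q i = 0 := by
          refine Finset.sum_eq_zero fun i hi => ?_
          simp only [hq, if_pos (Finset.mem_range.1 hi)]
        have htailq : ∑' k, q (k + n) = ∑' k, 1 / T.da (k + n) := by
          refine tsum_congr fun k => ?_
          simp only [hq, if_neg (by omega : ¬ k + n < n)]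
        rw [← hsplit, hzero', zero_add, htailq]
        exact hn.le
      have hg_le : ∀ i, (if i < n then N₁ / ε else Ninf) * (1 / T.da i) ≤
          N₁ / ε * (1 / T.da i) + Ninf * q i := by
        intro i
        by_cases h : i < n
        · simp only [if_pos h, hq]
          have : 0 ≤ Ninf * (0:ℝ) := by simp
          simp only [if_pos h, mul_zero, add_zero]
          exact le_rfl
        · simp only [if_neg h, hq]
          have h2 : 0 ≤ N₁ / ε * (1 / T.da i) :=
            mul_nonneg (div_nonneg hN₁0 hδ0.le) (hterm i).le
          linarith
      have h1sum : Summable (fun i => N₁ / ε * (1 / T.da i)) := T.sum_inv.mul_left _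
      have h2sum : Summable (fun i => Ninf * q i) := hq_sum.mul_left _
      have hsum' : Summable (fun i => (if i < n then N₁ / ε else Ninf) * (1 / T.da i)) := by
        refine Summable.of_nonneg_of_le
          (fun i => mul_nonneg (hw0 i) (hterm i).le)
          hg_le (h1sum.add h2sum)
      calc (∑' i, (if i < n then N₁ / ε else Ninf) * (1 / T.da i))
          ≤ ∑' i, (N₁ / ε * (1 / T.da i) + Ninf * q i) :=
            Summable.tsum_le_tsum hg_le hsum' (h1sum.add h2sum)
        _ = N₁ / ε * C + Ninf * ∑' i, q i := by
            rw [Summable.tsum_add h1sum h2sum, tsum_mul_left, tsum_mul_left]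
        _ ≤ N₁ / ε * C + Ninf * (1/2) := by
            have := mul_le_mul_of_nonneg_left hq_tsum hNinf0
            linarith
        _ = 1/2 * Ninf + C / ε * N₁ := by ring
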